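/- Let N ≥ 1 and a be integers with 1 ≤ a ≤ N, let n, l, c be nonnegative integers with l ≤ n. Then ∑_{k=l}^{n} (−1)^k / ((n−k)! · (2a/N)_{n+k+1}) · W^#_{k,l}({1}^c) = (−1)^l (Nl+a) / ((Nn+a)^{c+1} · (n−l)! · (2a/N)_{n+l+1}). -/

import Mathlib

open Finset

/-- The Pochhammer symbol (rising factorial) `(x)_n = x(x+1)⋯(x+n−1)`. -/
noncomputable def poch (x : ℝ) (n : ℕ) : ℝ := (ascPochhammer ℝ n).eval x

/-- `Δ(x,y) = 0` if `x = y` and `1` otherwise. -/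
def tri (x y : ℕ) : ℕ := if x = y then 0 else 1

/-- `W^#_{k,m}({1}^c)`: for `c ≥ 1` this is
`∑_{k ≥ l₁ ≥ ⋯ ≥ l_c ≥ m} 2^{Δ(k,l₁)+Δ(l₁,l₂)+⋯+Δ(l_c,m)} / ((Nl₁+a)⋯(Nl_c+a))`,
and for `c = 0` it is `2^{Δ(k,m)}`. -/
noncomputable def Wsharp (N a k m c : ℕ) : ℝ :=
  if c = 0 then (2 : ℝ) ^ tri k m
  else
    ∑ l : Fin c → Fin (k + 1),
      if (∀ i, m ≤ (l i : ℕ)) ∧ (∀ i j : Fin c, i ≤ j → (l j : ℕ) ≤ (l i : ℕ)) then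
        (fun ch : ℕ → ℕ =>
          (2 : ℝ) ^ (tri k (ch 0) + ∑ i ∈ Finset.range c, tri (ch i) (ch (i + 1))) /
            ∏ i : Fin c, ((N : ℝ) * (l i : ℕ) + a))
        (fun i => if h : i < c then (l ⟨i, h⟩ : ℕ) else m)
      else 0


lemma poch_succ (x : ℝ) (n : ℕ) : poch x (n+1) = poch x n * (x + n) := by
  simp [poch, ascPochhammer_succ_eval]

lemma poch_pos {x : ℝ} (hx : 0 < x) (n : ℕ) : 0 < poch x n := by
  induction n with
  | zero => simp [poch]
  | succ n ih => rw [poch_succ]; positivity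

-- key inner sum lemma
lemma Ulem (x : ℝ) (hx : 0 < x) (n : ℕ) :
    ∀ d l, l + d = n →
      ∑ k ∈ Icc l n, (-1 : ℝ) ^ k / ((n - k).factorial * poch x (n + k + 1))
        = (-1 : ℝ) ^ l / ((2 * n + x) * (n - l).factorial * poch x (n + l)) := by
  intro d
  induction d with
  | zero =>
    intro l hl
    subst hl
    simp only [Nat.add_zero, Icc_self, sum_singleton, Nat.sub_self]
    rw [show l + l + 1 = (l + l) + 1 from rfl, poch_succ]
    have h1 : (0:ℝ) < poch x (l + l) := poch_pos hx _
    have h2 : (0:ℝ) < 2 * l + x := by positivity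
    push_cast
    rw [div_eq_div_iff (by positivity) (by positivity)]
    ring
  | succ d ih =>
    intro l hl
    have hln : l < n := by omega
    rw [show Icc l n = insert l (Icc (l+1) n) by ext t; simp [mem_Icc]; omega,
      sum_insert (by simp [mem_Icc])]
    rw [ih (l+1) (by omega)]
    have e1 : n - l = d + 1 := by omega
    have e2 : n - (l+1) = d := by omega
    rw [e1, e2, show n + (l+1) = (n + l) + 1 from rfl, poch_succ]
    have h1 : (0:ℝ) < poch x (n + l) := poch_pos hx _
    have h2 : (0:ℝ) < x + (n + l : ℕ) := by positivity
    have h3 : (0:ℝ) < 2 * n + x := by positivity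
    have h4 : (0:ℝ) < (d+1).factorial := by positivity
    have h5 : ((d+1).factorial : ℝ) = (d+1) * d.factorial := by
      rw [Nat.factorial_succ]; push_cast; ring
    have h6 : (0:ℝ) < d.factorial := by positivity
    have hc : ((n + l : ℕ) : ℝ) = (n : ℝ) + l := by push_cast; ring
    rw [pow_succ, h5, hc]
    have hnl : (n : ℝ) = (l : ℝ) + d + 1 := by
      have : (l + (d+1) : ℕ) = n := hl
      push_cast [← this]; ring
    rw [hnl]
    field_simp
    ring


lemma Tlem (N a : ℕ) (h1 : 1 ≤ a) (h2 : a ≤ N) (n l : ℕ) (hln : l ≤ n) :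
    ∑ k ∈ Icc l n,
        (-1 : ℝ) ^ k / ((n - k).factorial * poch (2 * (a : ℝ) / N) (n + k + 1))
          * (2 : ℝ) ^ tri k l
      = (-1 : ℝ) ^ l * ((N : ℝ) * l + a) /
          (((N : ℝ) * n + a) * (n - l).factorial * poch (2 * (a : ℝ) / N) (n + l + 1)) := by
  have hN : (0:ℝ) < N := by exact_mod_cast Nat.lt_of_lt_of_le Nat.zero_lt_one (h1.trans h2)
  have ha : (0:ℝ) < a := by exact_mod_cast h1
  have hx : 0 < 2 * (a:ℝ) / N := by positivity
  set x := 2 * (a:ℝ) / N with hxdef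
  have key := Ulem x hx n (n - l) l (by omega)
  have step : ∑ k ∈ Icc l n,
      (-1 : ℝ) ^ k / ((n - k).factorial * poch x (n + k + 1)) * (2 : ℝ) ^ tri k l
      = 2 * ∑ k ∈ Icc l n, (-1 : ℝ) ^ k / ((n - k).factorial * poch x (n + k + 1))
        - (-1 : ℝ) ^ l / ((n - l).factorial * poch x (n + l + 1)) := by
    have e : (-1 : ℝ) ^ l / ((n - l).factorial * poch x (n + l + 1))
        = ∑ k ∈ Icc l n, if k = l then (-1 : ℝ) ^ k / ((n - k).factorial * poch x (n + k + 1)) else 0 := by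
      rw [sum_ite_eq' (Icc l n) l]
      simp [mem_Icc, hln]
    rw [e, mul_sum, ← sum_sub_distrib]
    apply sum_congr rfl
    intro k hk
    by_cases h : k = l <;> simp [tri, h] <;> ring
  rw [step, key]
  rw [show n + l + 1 = (n + l) + 1 from rfl, poch_succ]
  have h1' : (0:ℝ) < poch x (n + l) := poch_pos hx _
  have h2' : (0:ℝ) < x + (n + l : ℕ) := by positivity
  have h3' : (0:ℝ) < 2 * n + x := by positivity
  have h4' : (0:ℝ) < ((n-l).factorial : ℝ) := by positivity
  have h5' : (0:ℝ) < (N:ℝ) * n + a := by positivity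
  have hc : ((n + l : ℕ) : ℝ) = (n:ℝ) + l := by push_cast; ring
  rw [hc, hxdef]
  field_simp
  ring



def chf {c : ℕ} (m : ℕ) (l : Fin c → ℕ) (i : ℕ) : ℕ := if h : i < c then l ⟨i, h⟩ else m

noncomputable def Wt (N a K t m c : ℕ) (l : Fin c → Fin (K + 1)) : ℝ :=
  if (∀ i, (l i : ℕ) ≤ t) ∧ (∀ i, m ≤ (l i : ℕ)) ∧ (∀ i j : Fin c, i ≤ j → (l j : ℕ) ≤ (l i : ℕ)) then
    (2 : ℝ) ^ (tri t (chf m (fun i => (l i : ℕ)) 0) +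
        ∑ i ∈ Finset.range c, tri (chf m (fun i => (l i : ℕ)) i) (chf m (fun i => (l i : ℕ)) (i + 1))) /
      ∏ i : Fin c, ((N : ℝ) * (l i : ℕ) + a)
  else 0

lemma Wsharp_eq_Wt (N a k m c : ℕ) (hc : c ≠ 0) :
    Wsharp N a k m c = ∑ l : Fin c → Fin (k + 1), Wt N a k k m c l := by
  rw [Wsharp, if_neg hc]
  refine sum_congr rfl fun l _ => ?_
  rw [Wt]
  by_cases h : (∀ i, m ≤ (l i : ℕ)) ∧ (∀ i j : Fin c, i ≤ j → (l j : ℕ) ≤ (l i : ℕ))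
  · rw [if_pos h, if_pos ⟨fun i => Fin.is_le _, h.1, h.2⟩]
    rfl
  · rw [if_neg h, if_neg (by tauto)]

lemma chf_cons_zero {k c : ℕ} (m : ℕ) (x : Fin (k + 1)) (g : Fin c → Fin (k + 1)) :
    chf m (fun j => ((Fin.cons x g : Fin (c+1) → Fin (k+1)) j : ℕ)) 0 = (x : ℕ) := by
  unfold chf
  rw [dif_pos (Nat.succ_pos c)]
  simp

lemma chf_cons_succ {k c : ℕ} (m : ℕ) (x : Fin (k + 1)) (g : Fin c → Fin (k + 1)) (i : ℕ) :
    chf m (fun j => ((Fin.cons x g : Fin (c+1) → Fin (k+1)) j : ℕ)) (i + 1)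
      = chf m (fun j => (g j : ℕ)) i := by
  unfold chf
  by_cases h : i < c
  · rw [dif_pos (by omega : i + 1 < c + 1), dif_pos h]
    show ((Fin.cons x g : Fin (c+1) → Fin (k+1)) (Fin.succ ⟨i, h⟩) : ℕ) = _
    rw [Fin.cons_succ]
  · rw [dif_neg (by omega), dif_neg h]

lemma cons_cond {k c : ℕ} (m : ℕ) (x : Fin (k + 1)) (g : Fin c → Fin (k + 1)) :
    ((∀ i, ((Fin.cons x g : Fin (c+1) → Fin (k+1)) i : ℕ) ≤ k) ∧
        (∀ i, m ≤ ((Fin.cons x g : Fin (c+1) → Fin (k+1)) i : ℕ)) ∧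
        (∀ i j : Fin (c+1), i ≤ j →
          ((Fin.cons x g : Fin (c+1) → Fin (k+1)) j : ℕ) ≤ ((Fin.cons x g : Fin (c+1) → Fin (k+1)) i : ℕ)))
      ↔ (m ≤ (x : ℕ) ∧ ((∀ i, (g i : ℕ) ≤ (x : ℕ)) ∧ (∀ i, m ≤ (g i : ℕ)) ∧
          (∀ i j : Fin c, i ≤ j → (g j : ℕ) ≤ (g i : ℕ)))) := by
  constructor
  · rintro ⟨-, h2, h3⟩
    refine ⟨by simpa using h2 0, fun i => by simpa using h3 0 i.succ (Fin.zero_le _),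
      fun i => by simpa using h2 i.succ, fun i j hij => by
        simpa using h3 i.succ j.succ (Fin.succ_le_succ_iff.mpr hij)⟩
  · rintro ⟨hmx, hgx, hmg, hmono⟩
    refine ⟨fun i => Fin.is_le _, fun i => ?_, fun i j hij => ?_⟩
    · cases i using Fin.cases with
      | zero => simpa using hmx
      | succ i => simpa using hmg i
    · cases j using Fin.cases with
      | zero =>
        cases i using Fin.cases with
        | zero => exact le_refl _
        | succ i =>
          exfalso
          have := hij
          simp [Fin.le_def] at this
      | succ j =>
        cases i using Fin.cases with
        | zero => simpa using hgx j
        | succ i =>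
          simpa using hmono i j (Fin.succ_le_succ_iff.mp hij)

lemma Wt_cons_of_le {k c : ℕ} (N a m : ℕ) (x : Fin (k + 1)) (hmx : m ≤ (x : ℕ))
    (g : Fin c → Fin (k + 1)) :
    Wt N a k k m (c+1) (Fin.cons x g)
      = (2 : ℝ) ^ tri k (x : ℕ) / ((N : ℝ) * (x : ℕ) + a) * Wt N a k (x : ℕ) m c g := by
  rw [Wt, Wt]
  by_cases h : (∀ i, (g i : ℕ) ≤ (x : ℕ)) ∧ (∀ i, m ≤ (g i : ℕ)) ∧
      (∀ i j : Fin c, i ≤ j → (g j : ℕ) ≤ (g i : ℕ))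
  · rw [if_pos ((cons_cond m x g).mpr ⟨hmx, h⟩), if_pos h]
    have hexp : tri k (chf m (fun j => ((Fin.cons x g : Fin (c+1) → Fin (k+1)) j : ℕ)) 0) +
        ∑ i ∈ range (c+1),
          tri (chf m (fun j => ((Fin.cons x g : Fin (c+1) → Fin (k+1)) j : ℕ)) i)
            (chf m (fun j => ((Fin.cons x g : Fin (c+1) → Fin (k+1)) j : ℕ)) (i+1))
        = tri k (x : ℕ) + (tri (x : ℕ) (chf m (fun j => (g j : ℕ)) 0) +
            ∑ i ∈ range c, tri (chf m (fun j => (g j : ℕ)) i) (chf m (fun j => (g j : ℕ)) (i+1))) := by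
      rw [Finset.sum_range_succ']
      rw [chf_cons_zero]
      have e1 : ∑ i ∈ range c,
          tri (chf m (fun j => ((Fin.cons x g : Fin (c+1) → Fin (k+1)) j : ℕ)) (i+1))
            (chf m (fun j => ((Fin.cons x g : Fin (c+1) → Fin (k+1)) j : ℕ)) (i+1+1))
          = ∑ i ∈ range c, tri (chf m (fun j => (g j : ℕ)) i) (chf m (fun j => (g j : ℕ)) (i+1)) := by
        refine sum_congr rfl fun i _ => ?_
        rw [chf_cons_succ, chf_cons_succ]
      rw [e1, chf_cons_succ]
      ring
    rw [hexp]
    have hprod : ∏ i : Fin (c+1), ((N : ℝ) * ((Fin.cons x g : Fin (c+1) → Fin (k+1)) i : ℕ) + a)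
        = ((N : ℝ) * (x : ℕ) + a) * ∏ i : Fin c, ((N : ℝ) * (g i : ℕ) + a) := by
      rw [Fin.prod_univ_succ]
      simp [Fin.cons_succ]
    rw [hprod, pow_add, ← div_mul_div_comm]
  · rw [if_neg h, if_neg (fun hc => h ((cons_cond m x g).mp hc).2), mul_zero]

lemma Wt_cons_of_lt {k c : ℕ} (N a m : ℕ) (x : Fin (k + 1)) (hmx : ¬ m ≤ (x : ℕ))
    (g : Fin c → Fin (k + 1)) :
    Wt N a k k m (c+1) (Fin.cons x g) = 0 := by
  rw [Wt, if_neg]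
  intro hc
  exact hmx ((cons_cond m x g).mp hc).1

lemma Wt_sum_cast (N a k m c : ℕ) (x : Fin (k + 1)) :
    ∑ g : Fin c → Fin (k + 1), Wt N a k (x : ℕ) m c g
      = ∑ g : Fin c → Fin ((x : ℕ) + 1), Wt N a (x : ℕ) (x : ℕ) m c g := by
  have hxk : (x : ℕ) + 1 ≤ k + 1 := Nat.succ_le_succ x.is_le
  have h0 : ∀ g : Fin c → Fin (k + 1), Wt N a k (x : ℕ) m c g ≠ 0 → ∀ i, (g i : ℕ) ≤ (x : ℕ) := by
    intro g hg
    by_contra h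
    exact hg (by rw [Wt, if_neg (by tauto)])
  rw [← Finset.sum_filter_of_ne (fun g _ hne => h0 g hne)]
  have himg : univ.filter (fun g : Fin c → Fin (k + 1) => ∀ i, (g i : ℕ) ≤ (x : ℕ))
      = univ.image (fun (g : Fin c → Fin ((x : ℕ) + 1)) (i : Fin c) => Fin.castLE hxk (g i)) := by
    ext g
    simp only [mem_filter, mem_univ, true_and, mem_image]
    constructor
    · intro h
      exact ⟨fun i => ⟨(g i : ℕ), Nat.lt_succ_of_le (h i)⟩,
        funext fun i => Fin.ext (by simp)⟩
    · rintro ⟨g', rfl⟩ i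
      simpa using Nat.lt_succ_iff.mp (g' i).isLt
  rw [himg, sum_image (fun y _ z _ h => funext fun i => Fin.castLE_injective hxk (congrFun h i))]
  refine sum_congr rfl fun g _ => ?_
  rw [Wt, Wt]
  simp only [Fin.coe_castLE]

lemma Wt_sum_eq_Wsharp (N a x m c : ℕ) :
    ∑ g : Fin c → Fin (x + 1), Wt N a x x m c g = Wsharp N a x m c := by
  cases c with
  | zero =>
    rw [Wsharp, if_pos rfl]
    rw [Fintype.sum_unique]
    rw [Wt, if_pos ⟨fun i => i.elim0, fun i => i.elim0, fun i => i.elim0⟩]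
    simp [chf, tri]
  | succ c => exact (Wsharp_eq_Wt N a x m (c+1) (Nat.succ_ne_zero c)).symm

lemma Wsharp_succ (N a k m c : ℕ) :
    Wsharp N a k m (c + 1)
      = ∑ j ∈ Icc m k, (2 : ℝ) ^ tri k j / ((N : ℝ) * j + a) * Wsharp N a j m c := by
  rw [Wsharp_eq_Wt N a k m (c+1) (Nat.succ_ne_zero c)]
  rw [← Equiv.sum_comp (Fin.consEquiv fun _ => Fin (k + 1)) (Wt N a k k m (c+1))]
  rw [Fintype.sum_prod_type]
  have step : ∀ x : Fin (k + 1),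
      ∑ g : Fin c → Fin (k + 1), Wt N a k k m (c+1) (Fin.cons x g)
        = if m ≤ (x : ℕ) then
            (2 : ℝ) ^ tri k (x : ℕ) / ((N : ℝ) * (x : ℕ) + a) * Wsharp N a (x : ℕ) m c
          else 0 := by
    intro x
    by_cases hmx : m ≤ (x : ℕ)
    · rw [if_pos hmx]
      calc ∑ g : Fin c → Fin (k + 1), Wt N a k k m (c+1) (Fin.cons x g)
          = ∑ g : Fin c → Fin (k + 1),
              (2 : ℝ) ^ tri k (x : ℕ) / ((N : ℝ) * (x : ℕ) + a) * Wt N a k (x : ℕ) m c g :=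
            sum_congr rfl fun g _ => Wt_cons_of_le N a m x hmx g
        _ = _ := by rw [← mul_sum, Wt_sum_cast, Wt_sum_eq_Wsharp]
    · rw [if_neg hmx]
      exact sum_eq_zero fun g _ => Wt_cons_of_lt N a m x hmx g
  calc ∑ x : Fin (k + 1), ∑ g : Fin c → Fin (k + 1),
          Wt N a k k m (c+1) ((Fin.consEquiv fun _ => Fin (k + 1)) (x, g))
      = ∑ x : Fin (k + 1), (fun j : ℕ => if m ≤ j then
            (2 : ℝ) ^ tri k j / ((N : ℝ) * j + a) * Wsharp N a j m c else 0) (x : ℕ) :=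
        sum_congr rfl fun x _ => step x
    _ = ∑ j ∈ range (k + 1), (if m ≤ j then
            (2 : ℝ) ^ tri k j / ((N : ℝ) * j + a) * Wsharp N a j m c else 0) :=
        Fin.sum_univ_eq_sum_range (fun j : ℕ => if m ≤ j then
          (2 : ℝ) ^ tri k j / ((N : ℝ) * j + a) * Wsharp N a j m c else 0) (k + 1)
    _ = ∑ j ∈ Icc m k, (2 : ℝ) ^ tri k j / ((N : ℝ) * j + a) * Wsharp N a j m c := by
        rw [← Finset.sum_filter]
        congr 1
        ext j
        simp [mem_Icc, Nat.lt_succ_iff]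
        omega
section
variable {M : Type*} [AddCommMonoid M]
lemma sum_triangle (l n : ℕ) (F : ℕ → ℕ → M) :
    ∑ k ∈ Icc l n, ∑ j ∈ Icc l k, F k j = ∑ j ∈ Icc l n, ∑ k ∈ Icc j n, F k j := by
  rw [Finset.sum_sigma', Finset.sum_sigma']
  exact Finset.sum_nbij' (fun p => ⟨p.2, p.1⟩) (fun p => ⟨p.2, p.1⟩)
    (by simp [mem_Icc]; omega) (by simp [mem_Icc]; omega)
    (by simp) (by simp) (by simp)
end

/-- Lemma 2.2: for `1 ≤ a ≤ N` and `l ≤ n`,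
`∑_{k=l}^{n} (−1)^k/((n−k)!·(2a/N)_{n+k+1}) · W^#_{k,l}({1}^c)
  = (−1)^l (Nl+a) / ((Nn+a)^{c+1}·(n−l)!·(2a/N)_{n+l+1})`. -/
theorem sum_neg_one_pow_Wsharp_div_factorial_poch
    (N a : ℕ) (h1 : 1 ≤ a) (h2 : a ≤ N) (n l c : ℕ) (hln : l ≤ n) :
    ∑ k ∈ Finset.Icc l n,
        (-1 : ℝ) ^ k /
            ((n - k).factorial * poch (2 * (a : ℝ) / N) (n + k + 1)) *
          Wsharp N a k l c
      = (-1 : ℝ) ^ l * ((N : ℝ) * l + a) /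
          (((N : ℝ) * n + a) ^ (c + 1) * (n - l).factorial *
            poch (2 * (a : ℝ) / N) (n + l + 1)) := by
  have hN : (0:ℝ) < N := by exact_mod_cast Nat.lt_of_lt_of_le Nat.zero_lt_one (h1.trans h2)
  have ha : (0:ℝ) < a := by exact_mod_cast h1
  have hden : ∀ j : ℕ, (0:ℝ) < (N : ℝ) * j + a := fun j => by positivity
  have hx : 0 < 2 * (a:ℝ) / N := by positivity
  induction c with
  | zero =>
    calc ∑ k ∈ Finset.Icc l n,
          (-1 : ℝ) ^ k / ((n - k).factorial * poch (2 * (a : ℝ) / N) (n + k + 1))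
            * Wsharp N a k l 0
        = ∑ k ∈ Finset.Icc l n,
            (-1 : ℝ) ^ k / ((n - k).factorial * poch (2 * (a : ℝ) / N) (n + k + 1))
              * (2 : ℝ) ^ tri k l :=
          sum_congr rfl fun k _ => by rw [Wsharp, if_pos rfl]
      _ = (-1 : ℝ) ^ l * ((N : ℝ) * l + a) /
            (((N : ℝ) * n + a) ^ (0 + 1) * (n - l).factorial *
              poch (2 * (a : ℝ) / N) (n + l + 1)) := by
          rw [show (0 : ℕ) + 1 = 1 from rfl, pow_one]
          exact Tlem N a h1 h2 n l hln
  | succ c ih =>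
    calc ∑ k ∈ Finset.Icc l n,
          (-1 : ℝ) ^ k / ((n - k).factorial * poch (2 * (a : ℝ) / N) (n + k + 1))
            * Wsharp N a k l (c + 1)
        = ∑ k ∈ Finset.Icc l n, ∑ j ∈ Finset.Icc l k,
            (-1 : ℝ) ^ k / ((n - k).factorial * poch (2 * (a : ℝ) / N) (n + k + 1))
              * ((2 : ℝ) ^ tri k j / ((N : ℝ) * j + a) * Wsharp N a j l c) :=
          sum_congr rfl fun k _ => by rw [Wsharp_succ, mul_sum]
      _ = ∑ j ∈ Finset.Icc l n, ∑ k ∈ Finset.Icc j n,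
            (-1 : ℝ) ^ k / ((n - k).factorial * poch (2 * (a : ℝ) / N) (n + k + 1))
              * ((2 : ℝ) ^ tri k j / ((N : ℝ) * j + a) * Wsharp N a j l c) :=
          sum_triangle l n _
      _ = ∑ j ∈ Finset.Icc l n, Wsharp N a j l c / ((N : ℝ) * j + a) *
            ∑ k ∈ Finset.Icc j n,
              (-1 : ℝ) ^ k / ((n - k).factorial * poch (2 * (a : ℝ) / N) (n + k + 1))
                * (2 : ℝ) ^ tri k j := by
          refine sum_congr rfl fun j _ => ?_
          rw [mul_sum]
          exact sum_congr rfl fun k _ => by ring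
      _ = ∑ j ∈ Finset.Icc l n, Wsharp N a j l c / ((N : ℝ) * j + a) *
            ((-1 : ℝ) ^ j * ((N : ℝ) * j + a) /
              (((N : ℝ) * n + a) * (n - j).factorial * poch (2 * (a : ℝ) / N) (n + j + 1))) := by
          refine sum_congr rfl fun j hj => ?_
          rw [Tlem N a h1 h2 n j (mem_Icc.mp hj).2]
      _ = (((N : ℝ) * n + a))⁻¹ * ∑ j ∈ Finset.Icc l n,
            (-1 : ℝ) ^ j / ((n - j).factorial * poch (2 * (a : ℝ) / N) (n + j + 1))
              * Wsharp N a j l c := by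
          rw [mul_sum]
          refine sum_congr rfl fun j hj => ?_
          have h5 := hden j
          have h6 := hden n
          have h7 : (0:ℝ) < poch (2 * (a:ℝ) / N) (n + j + 1) := poch_pos hx _
          have h8 : (0:ℝ) < ((n - j).factorial : ℝ) := by positivity
          field_simp
      _ = (-1 : ℝ) ^ l * ((N : ℝ) * l + a) /
            (((N : ℝ) * n + a) ^ (c + 1 + 1) * (n - l).factorial *
              poch (2 * (a : ℝ) / N) (n + l + 1)) := by
          rw [ih]
          have h6 := hden n
          have h7 : (0:ℝ) < poch (2 * (a:ℝ) / N) (n + l + 1) := poch_pos hx _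
          have h8 : (0:ℝ) < ((n - l).factorial : ℝ) := by positivity
          rw [pow_succ]
          field_simp
          ring
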